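/- Let I ⊆ ℝ be an open interval, let χ, η : I → ℝ be functions, let C be a nonzero real constant, and let φ¹, φ² : I → ℝ be twice differentiable functions satisfying, for all ξ ∈ I, the linear equation (φⁱ)''(ξ) − (χ²(ξ) + η²(ξ))·φⁱ(ξ) = 0 for i = 1,2, together with the Wronskian relation φ¹(ξ)(φ²)'(ξ) − φ²(ξ)(φ¹)'(ξ) = 1/C. Define 𝒢(ξ) := C·φ¹(ξ)·φ²(ξ). Then at every point ξ ∈ I where 𝒢(ξ) > 0, the function 𝒢^{1/2} satisfies the nonlinear equation (𝒢^{1/2})''(ξ) − (χ²(ξ) + η²(ξ))·𝒢^{1/2}(ξ) + 1/(4·𝒢^{3/2}(ξ)) = 0. -/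

import Mathlib

/-- if φ¹, φ² are twice differentiable solutions on an open
interval I of φ'' − (χ² + η²)φ = 0 with Wronskian φ¹(φ²)' − φ²(φ¹)' = 1/C, and
𝒢 := C·φ¹·φ², then wherever 𝒢 > 0 the function 𝒢^{1/2} satisfies
(𝒢^{1/2})'' − (χ² + η²)𝒢^{1/2} + 1/(4𝒢^{3/2}) = 0. -/
theorem stmt9 (I : Set ℝ) (hI : ∃ a b : ℝ, I = Set.Ioo a b)
    (χ η : ℝ → ℝ) (C : ℝ) (hC : C ≠ 0)
    (φ₁ φ₂ φ₁' φ₂' φ₁'' φ₂'' : ℝ → ℝ)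
    (hd₁ : ∀ ξ ∈ I, HasDerivAt φ₁ (φ₁' ξ) ξ)
    (hd₁' : ∀ ξ ∈ I, HasDerivAt φ₁' (φ₁'' ξ) ξ)
    (hd₂ : ∀ ξ ∈ I, HasDerivAt φ₂ (φ₂' ξ) ξ)
    (hd₂' : ∀ ξ ∈ I, HasDerivAt φ₂' (φ₂'' ξ) ξ)
    (hode₁ : ∀ ξ ∈ I, φ₁'' ξ - (χ ξ ^ 2 + η ξ ^ 2) * φ₁ ξ = 0)
    (hode₂ : ∀ ξ ∈ I, φ₂'' ξ - (χ ξ ^ 2 + η ξ ^ 2) * φ₂ ξ = 0)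
    (hwr : ∀ ξ ∈ I, φ₁ ξ * φ₂' ξ - φ₂ ξ * φ₁' ξ = 1 / C) :
    ∀ ξ ∈ I, 0 < C * φ₁ ξ * φ₂ ξ →
      deriv (deriv (fun x => Real.sqrt (C * φ₁ x * φ₂ x))) ξ
          - (χ ξ ^ 2 + η ξ ^ 2) * Real.sqrt (C * φ₁ ξ * φ₂ ξ)
          + 1 / (4 * Real.sqrt (C * φ₁ ξ * φ₂ ξ) ^ 3) = 0 := by
  intro ξ hξ hG
  obtain ⟨a, b, rfl⟩ := hI
  set G : ℝ → ℝ := fun x => C * φ₁ x * φ₂ x with hGdef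
  set G' : ℝ → ℝ := fun x => C * (φ₁' x * φ₂ x + φ₁ x * φ₂' x) with hG'def
  have hGd : ∀ x ∈ Set.Ioo a b, HasDerivAt G (G' x) x := by
    intro x hx
    simpa [hGdef, hG'def, mul_assoc] using ((hd₁ x hx).mul (hd₂ x hx)).const_mul C
  -- the open set where G > 0 within the interval
  have hVopen : IsOpen {x | x ∈ Set.Ioo a b ∧ 0 < G x} := by
    rw [isOpen_iff_mem_nhds]
    rintro x ⟨hx1, hx2⟩
    have h1 : Set.Ioo a b ∈ nhds x := isOpen_Ioo.mem_nhds hx1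
    have h2 : G ⁻¹' Set.Ioi 0 ∈ nhds x :=
      (hGd x hx1).continuousAt.preimage_mem_nhds (isOpen_Ioi.mem_nhds hx2)
    filter_upwards [h1, h2] with y hy1 hy2
    exact ⟨hy1, hy2⟩
  have hVmem : {x | x ∈ Set.Ioo a b ∧ 0 < G x} ∈ nhds ξ :=
    hVopen.mem_nhds ⟨hξ, hG⟩
  have hsq : Real.sqrt (G ξ) ^ 2 = G ξ := Real.sq_sqrt hG.le
  have hsqpos : 0 < Real.sqrt (G ξ) := Real.sqrt_pos.mpr hG
  -- first derivative eventually
  have hev : deriv (fun x => Real.sqrt (G x)) =ᶠ[nhds ξ]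
      fun x => G' x / (2 * Real.sqrt (G x)) := by
    filter_upwards [hVmem] with x hx
    exact ((hGd x hx.1).sqrt (ne_of_gt hx.2)).deriv
  have h2 : deriv (deriv (fun x => Real.sqrt (G x))) ξ
      = deriv (fun x => G' x / (2 * Real.sqrt (G x))) ξ := hev.deriv_eq
  -- second derivative
  have hG'd : HasDerivAt G'
      (C * (φ₁'' ξ * φ₂ ξ + φ₁' ξ * φ₂' ξ + (φ₁' ξ * φ₂' ξ + φ₁ ξ * φ₂'' ξ))) ξ := by
    exact (((hd₁' ξ hξ).mul (hd₂ ξ hξ)).add ((hd₁ ξ hξ).mul (hd₂' ξ hξ))).const_mul C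
  have hden : HasDerivAt (fun x => 2 * Real.sqrt (G x))
      (2 * (G' ξ / (2 * Real.sqrt (G ξ)))) ξ :=
    ((hGd ξ hξ).sqrt (ne_of_gt hG)).const_mul 2
  have hdiv : deriv (fun x => G' x / (2 * Real.sqrt (G x))) ξ = _ :=
    (hG'd.div hden (by positivity)).deriv
  rw [h2, hdiv]
  -- algebra
  have hode1 : φ₁'' ξ = (χ ξ ^ 2 + η ξ ^ 2) * φ₁ ξ := by
    have := hode₁ ξ hξ; linarith
  have hode2 : φ₂'' ξ = (χ ξ ^ 2 + η ξ ^ 2) * φ₂ ξ := by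
    have := hode₂ ξ hξ; linarith
  have hwrC : C * (φ₁ ξ * φ₂' ξ - φ₂ ξ * φ₁' ξ) = 1 := by
    rw [hwr ξ hξ]; field_simp
  have hGeq : G ξ = C * φ₁ ξ * φ₂ ξ := rfl
  set s := Real.sqrt (G ξ) with hs
  rw [hode1, hode2]
  have hA : s ^ 2 = C * φ₁ ξ * φ₂ ξ := hsq.trans hGeq
  field_simp
  simp only [hG'def]
  linear_combination (16*C*φ₁' ξ*φ₂' ξ - 16*(χ ξ^2+η ξ^2)*s^2) * hA
    - 4*(C*(φ₁ ξ*φ₂' ξ - φ₂ ξ*φ₁' ξ) + 1) * hwrC
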